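/- For every f ∈ L^∞(K), the Lipschitz function H(t) = (J_K f)(σ_K(t)) satisfies H'(t) = f(σ_K(t)) for almost every t ∈ [0, λ(K)]. -/

import Mathlib

open MeasureTheory Set
open Filter Topology

/-- Measure projection `π_K`. -/
noncomputable def piProj (K : Set ℝ) (x : ℝ) : ℝ :=
  (volume (Set.Icc (sInf K) x ∩ K)).toReal

/-- Left-endpoint selector `σ_K`. -/
noncomputable def sigmaSel (K : Set ℝ) (t : ℝ) : ℝ :=
  sInf {x ∈ K | piProj K x = t}

/-- Primitive `J_K f`. -/
noncomputable def JPrim (K : Set ℝ) (f : ℝ → ℝ) (x : ℝ) : ℝ :=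
  ∫ y in Set.Icc (sInf K) x ∩ K, f y

section Aux

variable {K : Set ℝ} (hK : IsCompact K) (hne : K.Nonempty)

lemma vol_inter_ne_top (hK : IsCompact K) (S : Set ℝ) : volume (S ∩ K) ≠ ⊤ :=
  ne_top_of_le_ne_top hK.measure_ne_top (measure_mono inter_subset_right)

lemma piProj_mono (hK : IsCompact K) : Monotone (piProj K) := by
  intro x y hxy
  exact ENNReal.toReal_mono (vol_inter_ne_top hK _)
    (measure_mono (inter_subset_inter_left _ (Icc_subset_Icc_right hxy)))

lemma piProj_nonneg (x : ℝ) : 0 ≤ piProj K x := ENNReal.toReal_nonneg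

lemma piProj_le (hK : IsCompact K) (x : ℝ) : piProj K x ≤ (volume K).toReal :=
  ENNReal.toReal_mono hK.measure_ne_top (measure_mono inter_subset_right)

lemma piProj_zero_of_le (hK : IsCompact K) {x : ℝ} (hx : x ≤ sInf K) : piProj K x = 0 := by
  have : Icc (sInf K) x ∩ K ⊆ {sInf K} := by
    intro z hz
    simpa using le_antisymm (hz.1.2.trans hx) hz.1.1
  rw [piProj, measure_mono_null this (measure_singleton _)]
  simp

lemma piProj_sSup (hK : IsCompact K) (hne : K.Nonempty) :
    piProj K (sSup K) = (volume K).toReal := by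
  have : Icc (sInf K) (sSup K) ∩ K = K := by
    apply inter_eq_right.2
    intro z hz
    exact ⟨csInf_le hK.bddBelow hz, le_csSup hK.bddAbove hz⟩
  rw [piProj, this]

lemma piProj_diff (hK : IsCompact K) {x y : ℝ} (hx : sInf K ≤ x) (hxy : x ≤ y) :
    piProj K y - piProj K x = (volume (Ioc x y ∩ K)).toReal := by
  have hsplit : Icc (sInf K) y ∩ K = (Icc (sInf K) x ∩ K) ∪ (Ioc x y ∩ K) := by
    rw [← union_inter_distrib_right, Icc_union_Ioc_eq_Icc hx hxy]
  have hdisj : Disjoint (Icc (sInf K) x ∩ K) (Ioc x y ∩ K) := by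
    apply Disjoint.mono inter_subset_left inter_subset_left
    rw [Set.disjoint_left]; intro z hz hz'; exact absurd hz.2 (not_le.2 hz'.1)
  have hmeas : volume (Icc (sInf K) y ∩ K) =
      volume (Icc (sInf K) x ∩ K) + volume (Ioc x y ∩ K) := by
    rw [hsplit, measure_union hdisj (measurableSet_Ioc.inter hK.measurableSet)]
  rw [piProj, piProj, hmeas, ENNReal.toReal_add (vol_inter_ne_top hK _) (vol_inter_ne_top hK _)]
  ring

lemma ioc_toReal_le (hK : IsCompact K) {a b : ℝ} (hab : a ≤ b) :
    (volume (Ioc a b ∩ K)).toReal ≤ b - a := by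
  calc (volume (Ioc a b ∩ K)).toReal ≤ (volume (Ioc a b)).toReal := by
        apply ENNReal.toReal_mono (by simp) (measure_mono inter_subset_left)
    _ = b - a := by rw [Real.volume_Ioc, ENNReal.toReal_ofReal (by linarith)]

lemma piProj_sub_le (hK : IsCompact K) {x y : ℝ} (hxy : x ≤ y) :
    piProj K y - piProj K x ≤ y - x := by
  rcases le_total y (sInf K) with h | h
  · rw [piProj_zero_of_le hK h, piProj_zero_of_le hK (hxy.trans h)]; linarith
  rcases le_total x (sInf K) with h' | h'
  · rw [piProj_zero_of_le hK h']
    have := piProj_diff hK (le_refl (sInf K)) h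
    rw [piProj_zero_of_le hK (le_refl _)] at this
    have h2 := ioc_toReal_le hK h
    linarith
  · rw [piProj_diff hK h' hxy]
    exact ioc_toReal_le hK hxy

lemma piProj_lipschitz (hK : IsCompact K) : LipschitzWith 1 (piProj K) := by
  apply LipschitzWith.of_dist_le_mul
  intro x y
  rcases le_total x y with h | h
  · rw [Real.dist_eq, Real.dist_eq, abs_of_nonpos (by have := piProj_mono hK h; linarith),
      abs_of_nonpos (by linarith), neg_sub, neg_sub, NNReal.coe_one, one_mul]
    exact piProj_sub_le hK h
  · rw [Real.dist_eq, Real.dist_eq, abs_of_nonneg (by have := piProj_mono hK h; linarith),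
      abs_of_nonneg (by linarith), NNReal.coe_one, one_mul]
    exact piProj_sub_le hK h

lemma piProj_continuous (hK : IsCompact K) : Continuous (piProj K) :=
  (piProj_lipschitz hK).continuous

/-- fibers over `[0, volume K]` are nonempty -/
lemma fiber_nonempty (hK : IsCompact K) (hne : K.Nonempty) {t : ℝ}
    (ht : t ∈ Icc 0 (volume K).toReal) : ∃ x ∈ K, piProj K x = t := by
  have hle : sInf K ≤ sSup K := Real.sInf_le_sSup K hK.bddBelow hK.bddAbove
  have hIVT := intermediate_value_Icc hle (piProj_continuous hK).continuousOn
  have hmem : t ∈ Icc (piProj K (sInf K)) (piProj K (sSup K)) := by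
    rw [piProj_zero_of_le hK (le_refl _), piProj_sSup hK hne]; exact ht
  obtain ⟨x, hx, hpx⟩ := hIVT hmem
  set A := K ∩ Iic x with hA
  have hAne : A.Nonempty := ⟨sInf K, hK.sInf_mem hne, hx.1⟩
  have hAbdd : BddAbove A := hK.bddAbove.mono inter_subset_left
  have hAcl : IsClosed A := hK.isClosed.inter isClosed_Iic
  have hy : sSup A ∈ A := hAcl.csSup_mem hAne hAbdd
  refine ⟨sSup A, hy.1, ?_⟩
  have h1 : sInf K ≤ sSup A := csInf_le hK.bddBelow hy.1
  have h2 : piProj K x - piProj K (sSup A) = (volume (Ioc (sSup A) x ∩ K)).toReal :=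
    piProj_diff hK h1 hy.2
  have h3 : Ioc (sSup A) x ∩ K = ∅ := by
    rw [eq_empty_iff_forall_notMem]
    rintro z ⟨hz1, hz2⟩
    exact absurd (le_csSup hAbdd ⟨hz2, hz1.2⟩) (not_le.2 hz1.1)
  rw [h3] at h2
  simp at h2
  linarith

lemma sigmaSel_spec (hK : IsCompact K) (hne : K.Nonempty) {t : ℝ}
    (ht : t ∈ Icc 0 (volume K).toReal) :
    sigmaSel K t ∈ K ∧ piProj K (sigmaSel K t) = t := by
  obtain ⟨x, hx, hpx⟩ := fiber_nonempty hK hne ht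
  have hScl : IsClosed {x ∈ K | piProj K x = t} := by
    have : {x ∈ K | piProj K x = t} = K ∩ piProj K ⁻¹' {t} := rfl
    rw [this]
    exact hK.isClosed.inter (isClosed_singleton.preimage (piProj_continuous hK))
  have hmem := hScl.csInf_mem ⟨x, hx, hpx⟩ (hK.bddBelow.mono (fun z hz => hz.1))
  exact ⟨hmem.1, hmem.2⟩

lemma sigmaSel_le (hK : IsCompact K) {x : ℝ} (hx : x ∈ K) : sigmaSel K (piProj K x) ≤ x := by
  apply csInf_le _ (by exact ⟨hx, rfl⟩)
  exact hK.bddBelow.mono (fun z hz => hz.1)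

lemma sigmaSel_monotoneOn (hK : IsCompact K) (hne : K.Nonempty) :
    MonotoneOn (sigmaSel K) (Icc 0 (volume K).toReal) := by
  intro a ha b hb hab
  by_contra h
  push_neg at h
  have h1 := piProj_mono hK h.le
  rw [(sigmaSel_spec hK hne ha).2, (sigmaSel_spec hK hne hb).2] at h1
  have : a = b := le_antisymm hab h1
  subst this; exact lt_irrefl _ h

/-- Key measure computation. -/
lemma meas_preimage (hK : IsCompact K) (hne : K.Nonempty) {t : ℝ}
    (ht : t ∈ Icc 0 (volume K).toReal) :
    volume (K ∩ piProj K ⁻¹' Iic t) = ENNReal.ofReal t := by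
  obtain ⟨hs1, hs2⟩ := sigmaSel_spec hK hne ht
  have hD2 : volume (Icc (sInf K) (sigmaSel K t) ∩ K) = ENNReal.ofReal t := by
    conv_rhs => rw [← hs2]
    rw [piProj, ENNReal.ofReal_toReal (vol_inter_ne_top hK _)]
  apply le_antisymm
  · -- upper bound
    set A := K ∩ piProj K ⁻¹' Iic t with hA
    have hAne : A.Nonempty := ⟨sigmaSel K t, hs1, by simp [hs2]⟩
    have hAbdd : BddAbove A := hK.bddAbove.mono inter_subset_left
    have hAcl : IsClosed A :=
      hK.isClosed.inter (isClosed_Iic.preimage (piProj_continuous hK))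
    have hx0 : sSup A ∈ A := hAcl.csSup_mem hAne hAbdd
    have hsub : A ⊆ Icc (sInf K) (sSup A) ∩ K := by
      intro z hz
      exact ⟨⟨csInf_le hK.bddBelow hz.1, le_csSup hAbdd hz⟩, hz.1⟩
    calc volume A ≤ volume (Icc (sInf K) (sSup A) ∩ K) := measure_mono hsub
      _ = ENNReal.ofReal (piProj K (sSup A)) := by
          rw [piProj, ENNReal.ofReal_toReal (vol_inter_ne_top hK _)]
      _ ≤ ENNReal.ofReal t := ENNReal.ofReal_le_ofReal hx0.2
  · -- lower bound
    rw [← hD2]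
    apply measure_mono
    intro z hz
    refine ⟨hz.2, ?_⟩
    have : piProj K z ≤ piProj K (sigmaSel K t) := piProj_mono hK hz.1.2
    rw [hs2] at this
    exact this

/-- Pushforward of `volume.restrict K` under `piProj K` is Lebesgue on `[0, volume K]`. -/
lemma map_piProj (hK : IsCompact K) (hne : K.Nonempty) :
    Measure.map (piProj K) (volume.restrict K)
      = volume.restrict (Icc 0 (volume K).toReal) := by
  set L := (volume K).toReal with hL
  have hL0 : 0 ≤ L := ENNReal.toReal_nonneg
  haveI : IsFiniteMeasure (volume.restrict K) :=
    ⟨by rw [Measure.restrict_apply_univ]; exact hK.measure_lt_top⟩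
  have hπ : Measurable (piProj K) := (piProj_continuous hK).measurable
  haveI : IsFiniteMeasure (Measure.map (piProj K) (volume.restrict K)) := by
    constructor
    rw [Measure.map_apply hπ MeasurableSet.univ]
    exact measure_lt_top _ _
  apply MeasureTheory.Measure.ext_of_Iic
  intro a
  rw [Measure.map_apply hπ measurableSet_Iic, Measure.restrict_apply' hK.measurableSet,
    Measure.restrict_apply measurableSet_Iic]
  rcases lt_or_ge a 0 with h | h
  · have h1 : piProj K ⁻¹' Iic a ∩ K = ∅ := by
      rw [eq_empty_iff_forall_notMem]
      rintro z ⟨hz1, _⟩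
      exact absurd (le_trans (piProj_nonneg z) hz1) (not_le.2 h)
    have h2 : Iic a ∩ Icc 0 L = ∅ := by
      rw [eq_empty_iff_forall_notMem]
      rintro z ⟨hz1, hz2, _⟩
      exact absurd (le_trans hz2 hz1) (not_le.2 h)
    rw [h1, h2]
  rcases le_or_gt a L with h' | h'
  · have h1 := meas_preimage hK hne ⟨h, h'⟩
    rw [inter_comm] at h1
    rw [h1]
    have h2 : Iic a ∩ Icc 0 L = Icc 0 a := by
      ext z
      constructor
      · rintro ⟨hz1, hz2, _⟩; exact ⟨hz2, hz1⟩
      · rintro ⟨hz1, hz2⟩; exact ⟨hz2, hz1, hz2.trans h'⟩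
    rw [h2, Real.volume_Icc, sub_zero]
  · have h1 : piProj K ⁻¹' Iic a ∩ K = K := by
      apply inter_eq_right.2
      intro z hz
      exact le_trans (piProj_le hK z) h'.le
    have h2 : Iic a ∩ Icc 0 L = Icc 0 L := by
      apply inter_eq_right.2
      intro z hz
      exact hz.2.trans h'.le
    rw [h1, h2, Real.volume_Icc, sub_zero, hL, ENNReal.ofReal_toReal hK.measure_ne_top]

/-- `σ ∘ π = id` almost everywhere on `K`. -/
lemma sigma_pi_ae (hK : IsCompact K) (hne : K.Nonempty) :
    ∀ᵐ x ∂(volume.restrict K), sigmaSel K (piProj K x) = x := by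
  suffices hB : volume {x | x ∈ K ∧ sigmaSel K (piProj K x) ≠ x} = 0 by
    rw [MeasureTheory.ae_iff, Measure.restrict_apply' hK.measurableSet]
    refine measure_mono_null ?_ hB
    intro z hz
    exact ⟨hz.2, hz.1⟩
  have hcover : {x | x ∈ K ∧ sigmaSel K (piProj K x) ≠ x} ⊆
      ⋃ (q : ℚ), {x | x ∈ K ∧ (q : ℝ) < x ∧ volume (Ioc (q : ℝ) x ∩ K) = 0} := by
    rintro x ⟨hxK, hxne⟩
    obtain ⟨hyK, hyπ⟩ := sigmaSel_spec hK hne ⟨piProj_nonneg x, piProj_le hK x⟩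
    have hyx : sigmaSel K (piProj K x) ≤ x := sigmaSel_le hK hxK
    have hylt : sigmaSel K (piProj K x) < x := lt_of_le_of_ne hyx hxne
    have hvol : volume (Ioc (sigmaSel K (piProj K x)) x ∩ K) = 0 := by
      have hd := piProj_diff hK (csInf_le hK.bddBelow hyK) hyx
      rw [hyπ, sub_self] at hd
      rcases (ENNReal.toReal_eq_zero_iff _).1 hd.symm with h | h
      · exact h
      · exact absurd h (vol_inter_ne_top hK _)
    obtain ⟨q, hq1, hq2⟩ := exists_rat_btwn hylt
    refine mem_iUnion.2 ⟨q, hxK, hq2, ?_⟩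
    exact measure_mono_null (inter_subset_inter_left _ (Ioc_subset_Ioc_left hq1.le)) hvol
  apply measure_mono_null hcover
  apply measure_iUnion_null
  intro q
  set C := {x | x ∈ K ∧ (q : ℝ) < x ∧ volume (Ioc (q : ℝ) x ∩ K) = 0} with hC
  rcases eq_empty_or_nonempty C with hCe | hCne
  · simp [hCe]
  have hCbdd : BddAbove C := hK.bddAbove.mono (fun z hz => hz.1)
  obtain ⟨u, hu_mono, hu_tend, hu_mem⟩ := exists_seq_tendsto_sSup hCne hCbdd
  have hIoo : volume (Ioo (q : ℝ) (sSup C) ∩ K) = 0 := by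
    have hsub2 : Ioo (q : ℝ) (sSup C) ∩ K ⊆ ⋃ n, Ioc (q : ℝ) (u n) ∩ K := by
      rintro z ⟨⟨hz1, hz2⟩, hzK⟩
      obtain ⟨n, hn⟩ := (hu_tend.eventually (eventually_gt_nhds hz2)).exists
      exact mem_iUnion.2 ⟨n, ⟨hz1, hn.le⟩, hzK⟩
    exact measure_mono_null hsub2 (measure_iUnion_null (fun n => (hu_mem n).2.2))
  have hsub : C ⊆ (Ioo (q : ℝ) (sSup C) ∩ K) ∪ {sSup C} := by
    intro z hz
    rcases eq_or_lt_of_le (le_csSup hCbdd hz) with h | h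
    · right; simp [h]
    · left; exact ⟨⟨hz.2.1, h⟩, hz.1⟩
  exact measure_mono_null hsub (measure_union_null hIoo (measure_singleton _))

end Aux

/-- a.e. fundamental theorem of calculus for integrable functions. -/
lemma ftc_ae (g : ℝ → ℝ) (hg : Integrable g (volume : Measure ℝ)) :
    ∀ᵐ x ∂(volume : Measure ℝ),
      HasDerivAt (fun u => ∫ t in Iic u, g t) (g x) x := by
  set v := IsUnifLocDoublingMeasure.vitaliFamily (volume : Measure ℝ) 1 with hv
  filter_upwards [v.ae_tendsto_average_norm_sub hg.locallyIntegrable] with x hx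
  set F : ℝ → ℝ := fun u => ∫ t in Iic u, g t with hF
  have hdiff : ∀ {a b : ℝ}, a ≤ b → F b - F a = ∫ t in Ioc a b, g t := by
    intro a b hab
    have hdisj : Disjoint (Iic a) (Ioc a b) := by
      rw [Set.disjoint_left]; intro z hz hz'; exact absurd hz (not_le.2 hz'.1)
    have hun : Iic a ∪ Ioc a b = Iic b := Iic_union_Ioc_eq_Iic hab
    have := setIntegral_union hdisj measurableSet_Ioc
      (hg.integrableOn (s := Iic a)) (hg.integrableOn (s := Ioc a b)) (f := g) (μ := volume)
    rw [hun] at this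
    simp only [hF]
    rw [this]; ring
  have hbound : ∀ a b : ℝ, a ≤ x → x ≤ b → a < b →
      |(∫ t in Ioc a b, g t) - (b - a) * g x| ≤ (b - a) * ⨍ t in Icc a b, ‖g t - g x‖ := by
    intro a b hax hxb hab
    have hXY : (volume (Icc a b)).toReal = b - a := by
      rw [Real.volume_Icc, ENNReal.toReal_ofReal (by linarith)]
    have hconst : IntegrableOn (fun _ : ℝ => g x) (Icc a b) volume :=
      integrableOn_const (by rw [Real.volume_Icc]; exact ENNReal.ofReal_ne_top)
    have hsub : (∫ t in Ioc a b, g t) - (b - a) * g x = ∫ t in Ioc a b, (g t - g x) := by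
      rw [integral_sub (hg.integrableOn) (hconst.mono_set Ioc_subset_Icc_self),
        setIntegral_const, measureReal_def, Real.volume_Ioc, ENNReal.toReal_ofReal (by linarith), smul_eq_mul]
    rw [hsub]
    calc |∫ t in Ioc a b, (g t - g x)| = ‖∫ t in Ioc a b, (g t - g x)‖ :=
          (Real.norm_eq_abs _).symm
      _ ≤ ∫ t in Ioc a b, ‖g t - g x‖ := norm_integral_le_integral_norm _
      _ ≤ ∫ t in Icc a b, ‖g t - g x‖ := by
          apply setIntegral_mono_set ((hg.integrableOn.sub hconst).norm)
          · exact Filter.Eventually.of_forall (fun t => norm_nonneg _)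
          · exact HasSubset.Subset.eventuallyLE Ioc_subset_Icc_self
      _ = (b - a) * ⨍ t in Icc a b, ‖g t - g x‖ := by
          rw [setAverage_eq, measureReal_def, hXY, smul_eq_mul, ← mul_assoc,
            mul_inv_cancel₀ (by linarith : b - a ≠ 0), one_mul]
  have hR : HasDerivWithinAt F (g x) (Ici x) x := by
    rw [hasDerivWithinAt_iff_tendsto_slope, Ici_sdiff_left]
    have havg : Tendsto (fun y => ⨍ t in Icc x y, ‖g t - g x‖) (𝓝[>] x) (𝓝 0) :=
      hx.comp (Real.tendsto_Icc_vitaliFamily_right x)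
    rw [tendsto_iff_dist_tendsto_zero]
    apply squeeze_zero' (Filter.Eventually.of_forall (fun y => dist_nonneg)) _ havg
    filter_upwards [self_mem_nhdsWithin] with y hy
    have hxy : x < y := hy
    have hne : y - x ≠ 0 := by linarith
    rw [Real.dist_eq, slope_def_field, hdiff hxy.le]
    have heq : (∫ t in Ioc x y, g t) / (y - x) - g x
        = ((∫ t in Ioc x y, g t) - (y - x) * g x) / (y - x) := by
      field_simp
    rw [heq, abs_div, abs_of_pos (by linarith : (0:ℝ) < y - x),
      div_le_iff₀ (by linarith : (0:ℝ) < y - x)]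
    exact (hbound x y le_rfl hxy.le hxy).trans_eq (mul_comm _ _)
  have hL : HasDerivWithinAt F (g x) (Iic x) x := by
    rw [hasDerivWithinAt_iff_tendsto_slope, Iic_sdiff_right]
    have havg : Tendsto (fun y => ⨍ t in Icc y x, ‖g t - g x‖) (𝓝[<] x) (𝓝 0) :=
      hx.comp (Real.tendsto_Icc_vitaliFamily_left x)
    rw [tendsto_iff_dist_tendsto_zero]
    apply squeeze_zero' (Filter.Eventually.of_forall (fun y => dist_nonneg)) _ havg
    filter_upwards [self_mem_nhdsWithin] with y hy
    have hxy : y < x := hy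
    have hne : x - y ≠ 0 := by linarith
    rw [Real.dist_eq, slope_def_field]
    have h1 : F x - F y = ∫ t in Ioc y x, g t := hdiff hxy.le
    have heq : (F y - F x) / (y - x) - g x
        = ((∫ t in Ioc y x, g t) - (x - y) * g x) / (x - y) := by
      have h2 : F y - F x = -(∫ t in Ioc y x, g t) := by linarith
      rw [h2, neg_div, ← div_neg, neg_sub]
      field_simp
    rw [heq, abs_div, abs_of_pos (by linarith : (0:ℝ) < x - y),
      div_le_iff₀ (by linarith : (0:ℝ) < x - y)]
    exact (hbound y x hxy.le le_rfl hxy).trans_eq (mul_comm _ _)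
  have hcomb := hL.union hR
  rw [Iic_union_Ici] at hcomb
  exact hasDerivWithinAt_univ.1 hcomb

theorem stmt14 (K : Set ℝ) (hK : IsCompact K) (hpos : 0 < volume K)
    (f : ℝ → ℝ) (hf : Measurable f) (hfb : MemLp f ⊤ (volume.restrict K)) :
    ∀ᵐ t ∂(volume.restrict (Set.Icc (0 : ℝ) (volume K).toReal)),
      HasDerivAt (fun s => JPrim K f (sigmaSel K s)) (f (sigmaSel K t)) t := by
  have hne : K.Nonempty := by
    rcases K.eq_empty_or_nonempty with h | h
    · rw [h] at hpos; simp at hpos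
    · exact h
  set L := (volume K).toReal with hL
  have hL0 : 0 ≤ L := ENNReal.toReal_nonneg
  set μ := volume.restrict K with hμ
  haveI : IsFiniteMeasure μ := ⟨by
    rw [hμ, Measure.restrict_apply_univ]; exact hK.measure_lt_top⟩
  have hπm : Measurable (piProj K) := (piProj_continuous hK).measurable
  set h : ℝ → ℝ := fun t => sigmaSel K (max 0 (min t L)) with hh
  have hclamp : ∀ t, max 0 (min t L) ∈ Icc 0 L :=
    fun t => ⟨le_max_left _ _, max_le hL0 (min_le_right _ _)⟩
  have hhmono : Monotone h := by
    intro a b hab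
    exact sigmaSel_monotoneOn hK hne (hclamp a) (hclamp b)
      (max_le_max le_rfl (min_le_min hab le_rfl))
  have hheq : ∀ t ∈ Icc 0 L, h t = sigmaSel K t := by
    intro t ht
    rw [hh]
    simp only
    rw [min_eq_left ht.2, max_eq_right ht.1]
  have hfh : Measurable (f ∘ h) := hf.comp hhmono.measurable
  have hpi_mem : ∀ x ∈ K, piProj K x ∈ Icc 0 L :=
    fun x _ => ⟨piProj_nonneg x, piProj_le hK x⟩
  have hae_id : ∀ᵐ x ∂μ, h (piProj K x) = x := by
    filter_upwards [sigma_pi_ae hK hne, ae_restrict_mem hK.measurableSet] with x hx1 hx2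
    rw [hheq _ (hpi_mem x hx2), hx1]
  have hfint : Integrable f μ := hfb.integrable le_top
  have hmap := map_piProj hK hne
  have hint_fh : Integrable (f ∘ h) (volume.restrict (Icc 0 L)) := by
    rw [← hmap, integrable_map_measure hfh.aestronglyMeasurable hπm.aemeasurable]
    apply hfint.congr
    filter_upwards [hae_id] with x hx
    simp only [Function.comp_apply, hx]
  set g : ℝ → ℝ := (Icc 0 L).indicator (f ∘ h) with hg
  have hgint : Integrable g volume := by
    rw [hg, integrable_indicator_iff measurableSet_Icc]
    exact hint_fh
  have key : ∀ s ∈ Icc 0 L, JPrim K f (sigmaSel K s) = ∫ t in Iic s, g t := by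
    intro s hs
    obtain ⟨hs1, hs2⟩ := sigmaSel_spec hK hne hs
    have e1 : ∫ t in Iic s, g t = ∫ t in Iic s ∩ Icc 0 L, (f ∘ h) t := by
      rw [hg, setIntegral_indicator measurableSet_Icc]
    have e2 : ∫ t in Iic s ∩ Icc 0 L, (f ∘ h) t
        = ∫ t in Iic s, (f ∘ h) t ∂(volume.restrict (Icc 0 L)) := by
      rw [Measure.restrict_restrict measurableSet_Iic]
    have e3 : (∫ t in Iic s, (f ∘ h) t ∂(volume.restrict (Icc 0 L)))
        = ∫ x in piProj K ⁻¹' Iic s, (f ∘ h) (piProj K x) ∂μ := by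
      rw [← hmap, setIntegral_map measurableSet_Iic hfh.aestronglyMeasurable
        hπm.aemeasurable]
    have e4 : (∫ x in piProj K ⁻¹' Iic s, (f ∘ h) (piProj K x) ∂μ)
        = ∫ x in piProj K ⁻¹' Iic s, f x ∂μ := by
      apply setIntegral_congr_ae (hπm measurableSet_Iic)
      filter_upwards [hae_id] with x hx _
      simp only [Function.comp_apply, hx]
    have e5 : (∫ x in piProj K ⁻¹' Iic s, f x ∂μ)
        = ∫ x in piProj K ⁻¹' Iic s ∩ K, f x := by
      rw [hμ, Measure.restrict_restrict (hπm measurableSet_Iic)]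
    have e6 : (∫ x in piProj K ⁻¹' Iic s ∩ K, f x)
        = ∫ x in Icc (sInf K) (sigmaSel K s) ∩ K, f x := by
      apply setIntegral_congr_set
      have hsub : Icc (sInf K) (sigmaSel K s) ∩ K ⊆ piProj K ⁻¹' Iic s ∩ K := by
        intro z hz
        refine ⟨?_, hz.2⟩
        have := piProj_mono hK hz.1.2
        rw [hs2] at this
        exact this
      have hv1 : volume (piProj K ⁻¹' Iic s ∩ K) = ENNReal.ofReal s := by
        rw [inter_comm]; exact meas_preimage hK hne hs
      have hv2 : volume (Icc (sInf K) (sigmaSel K s) ∩ K) = ENNReal.ofReal s := by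
        conv_rhs => rw [← hs2]
        rw [piProj, ENNReal.ofReal_toReal (vol_inter_ne_top hK _)]
      exact (ae_eq_of_subset_of_measure_ge hsub (le_of_eq (hv1.trans hv2.symm))
        (measurableSet_Icc.inter hK.measurableSet).nullMeasurableSet
        (by rw [hv1]; exact ENNReal.ofReal_ne_top)).symm
    rw [e1, e2, e3, e4, e5, e6, JPrim]
  have hK0L : (∀ᵐ t ∂(volume : Measure ℝ), t ∉ ({0, L} : Set ℝ)) := by
    rw [← measure_eq_zero_iff_ae_notMem]
    exact measure_union_null (measure_singleton _) (measure_singleton _)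
  filter_upwards [ae_restrict_of_ae (ftc_ae g hgint), ae_restrict_mem measurableSet_Icc,
    ae_restrict_of_ae hK0L] with t hftc htmem htne
  simp only [mem_insert_iff, mem_singleton_iff, not_or] at htne
  have ht0 : 0 < t := lt_of_le_of_ne htmem.1 (Ne.symm htne.1)
  have htL : t < L := lt_of_le_of_ne htmem.2 htne.2
  have hgt : g t = f (sigmaSel K t) := by
    rw [hg, indicator_of_mem htmem, Function.comp_apply, hheq t htmem]
  have hEv : (fun s => JPrim K f (sigmaSel K s)) =ᶠ[nhds t] (fun u => ∫ r in Iic u, g r) := by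
    filter_upwards [isOpen_Ioo.mem_nhds (⟨ht0, htL⟩ : t ∈ Ioo 0 L)] with s hs
    exact key s ⟨hs.1.le, hs.2.le⟩
  rw [← hgt]
  exact hftc.congr_of_eventuallyEq hEv
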